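/- arXiv:1210.6527 — 2 statements merged into one kernel-verified Lean document; each statement's English description precedes it below -/
import Mathlib

section
/- Let A be an integer matrix with columns a₁,…,a_m ∈ ℤ^n, and suppose the cone C(A) := ∑_i ℝ≥0·a_i can be written as a finite union of cones C_j, where each C_j is generated by a subset of the columns of A which forms part of a ℤ-basis of ℤ^n. Then the semigroup ℕA := ∑_i ℕ·a_i is saturated, i.e. ℕA = C(A) ∩ ℤ^n. -/
lemma cast_basis_exists (n : ℕ) (bas : Module.Basis (Fin n) ℤ (Fin n → ℤ)) :
    ∃ basR : Module.Basis (Fin n) ℝ (Fin n → ℝ), ∀ k, basR k = fun j => ((bas k j : ℤ) : ℝ) := by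
  classical
  set e := Pi.basisFun ℤ (Fin n) with he
  set M := e.toMatrix bas with hM
  haveI hMinv : Invertible M := e.invertibleToMatrix bas
  set Mr := M.map (Int.cast : ℤ → ℝ) with hMr
  haveI hMrinv : Invertible Mr := by
    have := Invertible.map ((Int.castRingHom ℝ).mapMatrix :
      Matrix (Fin n) (Fin n) ℤ →+* Matrix (Fin n) (Fin n) ℝ) M
    simpa [RingHom.mapMatrix_apply] using this
  refine ⟨(Pi.basisFun ℝ (Fin n)).map (Matrix.toLinearEquiv' Mr hMrinv), ?_⟩
  intro k
  funext j
  have h1 : Mr j k = ((bas k j : ℤ) : ℝ) := by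
    simp [hMr, hM, Module.Basis.toMatrix_apply, he]
  simp [Module.Basis.map_apply, Matrix.toLinearEquiv', Matrix.toLin'_apply,
    Matrix.mulVec_single, h1]

/-- if the cone generated by the columns of `A` is a finite union of cones,
each generated by a subset of the columns forming part of a `ℤ`-basis of `ℤ^n`, then the
semigroup `ℕA` is saturated: `ℕA = C(A) ∩ ℤ^n`. -/
theorem semigroup_saturated_of_smooth_cover (n m : ℕ)
    (a : Fin m → (Fin n → ℤ))
    (coneOf : Finset (Fin m) → Set (Fin n → ℝ))
    (hconeOf : ∀ s, coneOf s = {v | ∃ lam : Fin m → ℝ, (∀ i, 0 ≤ lam i) ∧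
      (∀ i ∉ s, lam i = 0) ∧ v = ∑ i : Fin m, lam i • (fun j => (a i j : ℝ))})
    (F : Finset (Finset (Fin m)))
    (hsmooth : ∀ s ∈ F, ∃ (bas : Module.Basis (Fin n) ℤ (Fin n → ℤ)) (ι : {i // i ∈ s} → Fin n),
      Function.Injective ι ∧ ∀ i : {i // i ∈ s}, bas (ι i) = a i.val)
    (hcover : coneOf Finset.univ = ⋃ s ∈ F, coneOf s) :
    ∀ x : Fin n → ℤ,
      ((fun j => (x j : ℝ)) ∈ coneOf Finset.univ) ↔
      (∃ mu : Fin m → ℕ, x = ∑ i : Fin m, mu i • a i) := by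
  classical
  intro x
  constructor
  · intro hx
    rw [hcover] at hx
    simp only [Set.mem_iUnion] at hx
    obtain ⟨s, hsF, hxs⟩ := hx
    rw [hconeOf] at hxs
    obtain ⟨lam, hnn, hzero, hsum⟩ := hxs
    obtain ⟨bas, ι, hinj, hbas⟩ := hsmooth s hsF
    obtain ⟨basR, hbasR⟩ := cast_basis_exists n bas
    set T : Finset (Fin n) := Finset.univ.image ι with hT
    set c : Fin n → ℝ := fun k =>
      if h : ∃ i : {i // i ∈ s}, ι i = k then lam (h.choose).val else 0 with hc
    -- basR (ι i) is the cast of a i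
    have hbr : ∀ i : {i // i ∈ s}, basR (ι i) = fun j => ((a i.val j : ℤ) : ℝ) := by
      intro i; rw [hbasR, hbas]
    -- representation 1: integer coefficients
    have h1 : (fun j => (x j : ℝ)) = ∑ k, ((bas.repr x k : ℤ) : ℝ) • basR k := by
      funext j
      have hx2 : (∑ k, bas.repr x k • bas k) = x := bas.sum_repr x
      have := congrFun hx2 j
      simp only [Finset.sum_apply, Pi.smul_apply, smul_eq_mul] at this
      rw [← this]
      push_cast
      simp only [Finset.sum_apply, Pi.smul_apply, smul_eq_mul, hbasR]
    -- representation 2: lam coefficients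
    have h2 : (fun j => (x j : ℝ)) = ∑ k, c k • basR k := by
      rw [hsum]
      have hTsum : ∑ k, c k • basR k = ∑ k ∈ T, c k • basR k := by
        refine (Finset.sum_subset (Finset.subset_univ T) ?_).symm
        intro k _ hk
        have hne : ¬ ∃ i : {i // i ∈ s}, ι i = k := by
          intro ⟨i, hi⟩; exact hk (Finset.mem_image.2 ⟨i, Finset.mem_univ i, hi⟩)
        simp only [hc]
        rw [dif_neg hne, zero_smul]
      rw [hTsum, hT, Finset.sum_image (fun i _ i' _ h => hinj h)]
      have hci : ∀ i : {i // i ∈ s}, c (ι i) = lam i.val := by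
        intro i
        have hex : ∃ i' : {i // i ∈ s}, ι i' = ι i := ⟨i, rfl⟩
        have := hinj hex.choose_spec
        simp only [hc, dif_pos hex, this]
      have step : ∑ i : {i // i ∈ s}, c (ι i) • basR (ι i)
          = ∑ i : {i // i ∈ s}, lam i.val • (fun j => ((a i.val j : ℤ) : ℝ)) := by
        refine Finset.sum_congr rfl fun i _ => ?_
        rw [hci i, hbr i]
      rw [step, Finset.sum_coe_sort s (fun i => lam i • (fun j => ((a i j : ℤ) : ℝ)))]
      refine (Finset.sum_subset (Finset.subset_univ s) ?_).symm
      intro i _ hi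
      simp [hzero i hi]
    -- coefficients agree
    have hcoef : ∀ k, c k = ((bas.repr x k : ℤ) : ℝ) := by
      intro k
      have := h1.symm.trans h2
      have h3 : basR.repr (∑ k, ((bas.repr x k : ℤ) : ℝ) • basR k)
          = basR.repr (∑ k, c k • basR k) := by rw [this]
      have h4 := congrFun (basR.repr_sum_self (fun k => ((bas.repr x k : ℤ) : ℝ))) k
      have h5 := congrFun (basR.repr_sum_self c) k
      rw [h3] at h4
      rw [h4] at h5
      exact h5.symm
    -- for i ∈ s, bas.repr x (ι i) = lam i ≥ 0
    have hpos : ∀ i : {i // i ∈ s}, 0 ≤ bas.repr x (ι i) := by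
      intro i
      have : ((bas.repr x (ι i) : ℤ) : ℝ) = lam i.val := by
        rw [← hcoef (ι i)]
        have hex : ∃ i' : {i // i ∈ s}, ι i' = ι i := ⟨i, rfl⟩
        have := hinj hex.choose_spec
        simp only [hc, dif_pos hex, this]
      have h0 : (0:ℝ) ≤ ((bas.repr x (ι i) : ℤ) : ℝ) := this ▸ hnn i.val
      exact_mod_cast h0
    -- off the image, coefficients vanish
    have hoff : ∀ k, k ∉ T → bas.repr x k = 0 := by
      intro k hk
      have : ¬ ∃ i : {i // i ∈ s}, ι i = k := by
        intro ⟨i, hi⟩; exact hk (Finset.mem_image.2 ⟨i, Finset.mem_univ i, hi⟩)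
      have := hcoef k
      simp only [hc, dif_neg ‹¬ _›] at this
      exact_mod_cast this.symm
    -- build mu
    set mu : Fin m → ℕ := fun i => if h : i ∈ s then (bas.repr x (ι ⟨i, h⟩)).toNat else 0
      with hmudef
    refine ⟨mu, ?_⟩
    have hxsum : x = ∑ k ∈ T, bas.repr x k • bas k := by
      conv_lhs => rw [← bas.sum_repr x]
      refine (Finset.sum_subset (Finset.subset_univ T) ?_).symm
      intro k _ hk
      rw [hoff k hk, zero_smul]
    have e1 : ∑ i : Fin m, mu i • a i = ∑ i ∈ s, mu i • a i := by
      refine (Finset.sum_subset (Finset.subset_univ s) ?_).symm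
      intro i _ hi
      simp [hmudef, dif_neg hi]
    have e2 : ∑ i ∈ s, mu i • a i = ∑ i : {i // i ∈ s}, bas.repr x (ι i) • a i.val := by
      rw [← Finset.sum_coe_sort s (fun i => mu i • a i)]
      refine Finset.sum_congr rfl fun i _ => ?_
      have hmi : mu i.val = (bas.repr x (ι i)).toNat := by
        simp [hmudef, dif_pos i.prop]
      rw [hmi, ← natCast_zsmul, Int.toNat_of_nonneg (hpos i)]
    have e3 : ∑ i : {i // i ∈ s}, bas.repr x (ι i) • a i.val = x := by
      conv_rhs => rw [hxsum, hT]
      rw [Finset.sum_image (fun i _ i' _ h => hinj h)]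
      refine Finset.sum_congr rfl fun i _ => ?_
      rw [hbas i]
    rw [e1, e2, e3]
  · intro ⟨mu, hmu⟩
    rw [hconeOf]
    refine ⟨fun i => (mu i : ℝ), fun i => Nat.cast_nonneg _, fun i hi => absurd (Finset.mem_univ i) hi, ?_⟩
    funext j
    rw [hmu]
    push_cast
    simp [Finset.sum_apply]
end

section
/- Suppose vectors a₁,…,a_m ∈ ℝ^n positively span ℝ^n, i.e. every vector in ℝ^n is a nonnegative real combination of the a_i (equivalently, the cone they generate is all of ℝ^n). If additionally the a_i lie in ℚ^n, then there exist strictly positive integers λ₁,…,λ_m with ∑_{i=1}^m λ_i a_i = 0. -/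
open Matrix Finset

section Aux

variable {m : ℕ}

/-- coercion of a rational vector to a real vector -/
noncomputable def ratCastVec (m : ℕ) (x : Fin m → ℚ) : Fin m → ℝ := fun i => (x i : ℝ)

lemma ratCastVec_add (x y : Fin m → ℚ) :
    ratCastVec m (x + y) = ratCastVec m x + ratCastVec m y := by
  funext i; simp [ratCastVec]

lemma ratCastVec_smul (q : ℚ) (x : Fin m → ℚ) :
    ratCastVec m (q • x) = (q : ℝ) • ratCastVec m x := by
  funext i; simp [ratCastVec]

lemma ratCastVec_dot (x y : Fin m → ℚ) :
    ratCastVec m x ⬝ᵥ ratCastVec m y = ((x ⬝ᵥ y : ℚ) : ℝ) := by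
  simp [ratCastVec, dotProduct]

/-- The key algebraic fact: a real vector that is orthogonal to a family of rational
vectors lies in the real span of the rational vectors orthogonal (over `ℚ`) to that family. -/
lemma mem_span_rat_ker {n : ℕ} (b : Fin n → (Fin m → ℚ)) (μ : Fin m → ℝ)
    (hμ : ∀ j, μ ⬝ᵥ ratCastVec m (b j) = 0) :
    μ ∈ Submodule.span ℝ (ratCastVec m ''
      {x : Fin m → ℚ | ∀ j, (b j) ⬝ᵥ x = 0}) := by
  classical
  set B : LinearMap.BilinForm ℚ (Fin m → ℚ) :=
    LinearMap.mk₂ ℚ (fun x y => x ⬝ᵥ y) add_dotProduct smul_dotProduct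
      dotProduct_add dotProduct_smul with hBdef
  have hBapp : ∀ x y, B x y = x ⬝ᵥ y := fun x y => rfl
  have hrefl : B.IsRefl := by
    intro x y h
    rw [hBapp] at h ⊢
    rwa [dotProduct_comm]
  set W : Submodule ℚ (Fin m → ℚ) := Submodule.span ℚ (Set.range b) with hWdef
  have hrestrict : (B.restrict W).Nondegenerate := by
    have key : ∀ x : W, B.restrict W x x = 0 → x = 0 := by
      intro x hx
      have h0 : (x : Fin m → ℚ) ⬝ᵥ (x : Fin m → ℚ) = 0 := hx
      have : (x : Fin m → ℚ) = 0 := dotProduct_self_eq_zero.mp h0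
      exact Subtype.ext this
    exact ⟨fun x hx => key x (hx x), fun x hx => key x (hx x)⟩
  set K : Submodule ℚ (Fin m → ℚ) := B.orthogonal W with hKdef
  have hcompl : IsCompl W K :=
    LinearMap.BilinForm.isCompl_orthogonal_of_restrict_nondegenerate hrefl hrestrict
  -- membership in K implies orthogonality conditions
  have hKorth : ∀ k' ∈ K, ∀ w' ∈ W, w' ⬝ᵥ k' = 0 := by
    intro k' hk' w' hw'
    exact hk' w' hw'
  have hKset : ∀ k' ∈ K, k' ∈ {x : Fin m → ℚ | ∀ j, (b j) ⬝ᵥ x = 0} := by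
    intro k' hk' j
    exact hKorth k' hk' (b j) (Submodule.subset_span ⟨j, rfl⟩)
  -- real spans
  set Wr : Submodule ℝ (Fin m → ℝ) := Submodule.span ℝ (ratCastVec m '' (W : Set (Fin m → ℚ)))
    with hWrdef
  set Kr : Submodule ℝ (Fin m → ℝ) := Submodule.span ℝ (ratCastVec m '' (K : Set (Fin m → ℚ)))
    with hKrdef
  -- Wr ⊔ Kr = ⊤
  have htop : Wr ⊔ Kr = ⊤ := by
    rw [eq_top_iff]
    intro x _
    have hx : x = ∑ i : Fin m, x i • ratCastVec m (fun j => if i = j then 1 else 0) := by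
      have := pi_eq_sum_univ x
      convert this using 2 with i
      congr 1
      funext j
      simp [ratCastVec]
      split <;> simp
    rw [hx]
    apply Submodule.sum_mem
    intro i _
    apply Submodule.smul_mem
    -- decompose the rational standard basis vector
    have hmem : (fun j => if i = j then (1:ℚ) else 0) ∈ W ⊔ K := by
      rw [hcompl.sup_eq_top]; trivial
    obtain ⟨r, hr, k, hk, hrk⟩ := Submodule.mem_sup.mp hmem
    have : ratCastVec m (fun j => if i = j then (1:ℚ) else 0) = ratCastVec m r + ratCastVec m k := by
      rw [← ratCastVec_add, hrk]
    rw [this]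
    exact Submodule.add_mem _
      (Submodule.mem_sup_left (Submodule.subset_span ⟨r, hr, rfl⟩))
      (Submodule.mem_sup_right (Submodule.subset_span ⟨k, hk, rfl⟩))
  -- μ is orthogonal to (the cast of) every element of W
  have hμW : ∀ w' ∈ W, μ ⬝ᵥ ratCastVec m w' = 0 := by
    intro w' hw'
    induction hw' using Submodule.span_induction with
    | mem x hx => obtain ⟨j, rfl⟩ := hx; exact hμ j
    | zero =>
      have h0 : ratCastVec m (0 : Fin m → ℚ) = 0 := by funext i; simp [ratCastVec]
      rw [h0, dotProduct_zero]
    | add x y hx hy ihx ihy => rw [ratCastVec_add, dotProduct_add, ihx, ihy, add_zero]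
    | smul q x hx ihx => rw [ratCastVec_smul, dotProduct_smul, ihx, smul_zero]
  -- every element of Kr is orthogonal to (the cast of) every element of W
  have hKrW : ∀ x ∈ Kr, ∀ w' ∈ W, x ⬝ᵥ ratCastVec m w' = 0 := by
    intro x hx
    induction hx using Submodule.span_induction with
    | mem x hx =>
      obtain ⟨k', hk', rfl⟩ := hx
      intro w' hw'
      have : w' ⬝ᵥ k' = 0 := hKorth k' hk' w' hw'
      rw [dotProduct_comm, ratCastVec_dot, this]
      norm_num
    | zero => intro w' _; simp
    | add x y hx hy ihx ihy =>
      intro w' hw'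
      rw [add_dotProduct, ihx w' hw', ihy w' hw', add_zero]
    | smul c x hx ihx =>
      intro w' hw'
      rw [smul_dotProduct, ihx w' hw', smul_zero]
  -- decompose μ = w + k with w ∈ Wr, k ∈ Kr
  have hμtop : μ ∈ Wr ⊔ Kr := by rw [htop]; trivial
  obtain ⟨w, hw, k, hk, hμwk⟩ := Submodule.mem_sup.mp hμtop
  -- w is orthogonal to the cast of every element of W
  have hworth : ∀ w' ∈ W, w ⬝ᵥ ratCastVec m w' = 0 := by
    intro w' hw'
    have h1 : μ ⬝ᵥ ratCastVec m w' = 0 := hμW w' hw'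
    have h2 : k ⬝ᵥ ratCastVec m w' = 0 := hKrW k hk w' hw'
    have : w = μ - k := by rw [← hμwk]; ring
    rw [this, sub_dotProduct, h1, h2, sub_zero]
  -- hence w ⬝ᵥ w = 0
  have hww : w ⬝ᵥ w = 0 := by
    have hgen : ∀ x ∈ Wr, w ⬝ᵥ x = 0 := by
      intro x hx
      induction hx using Submodule.span_induction with
      | mem x hx => obtain ⟨w', hw', rfl⟩ := hx; exact hworth w' hw'
      | zero => simp
      | add x y hx hy ihx ihy => rw [dotProduct_add, ihx, ihy, add_zero]
      | smul c x hx ihx => rw [dotProduct_smul, ihx, smul_zero]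
    exact hgen w hw
  have hw0 : w = 0 := dotProduct_self_eq_zero.mp hww
  have hμk : μ = k := by rw [← hμwk, hw0, zero_add]
  rw [hμk]
  refine Submodule.span_mono ?_ hk
  exact Set.image_mono (fun k' hk' => hKset k' hk')

end Aux

/-- if rational vectors `a₁,…,a_m` positively span `ℝ^n`, then there is a
strictly positive integral relation `∑ λᵢ aᵢ = 0`. -/
theorem exists_positive_integral_relation (n m : ℕ)
    (a : Fin m → (Fin n → ℚ))
    (hspan : ∀ v : Fin n → ℝ, ∃ lam : Fin m → ℝ, (∀ i, 0 ≤ lam i) ∧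
      v = ∑ i : Fin m, lam i • (fun j => (a i j : ℝ))) :
    ∃ lam : Fin m → ℤ, (∀ i, 0 < lam i) ∧ ∑ i : Fin m, lam i • a i = 0 := by
  classical
  -- get a real relation with coefficients ≥ 1
  obtain ⟨lam, hlam0, hlamv⟩ := hspan (-(∑ i : Fin m, fun j => (a i j : ℝ)))
  set μ : Fin m → ℝ := fun i => 1 + lam i with hμdef
  set b : Fin n → (Fin m → ℚ) := fun j i => a i j with hbdef
  have hμpos : ∀ i, (1:ℝ) ≤ μ i := fun i => by
    simp [hμdef]; exact hlam0 i
  have hμj : ∀ j, μ ⬝ᵥ ratCastVec m (b j) = 0 := by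
    intro j
    have hv := congrFun hlamv j
    simp only [Finset.sum_apply, Pi.neg_apply, Pi.smul_apply, smul_eq_mul] at hv
    simp only [dotProduct, ratCastVec, hμdef, hbdef]
    have : ∑ i : Fin m, (1 + lam i) * (a i j : ℝ)
        = ∑ i : Fin m, (a i j : ℝ) + ∑ i : Fin m, lam i * (a i j : ℝ) := by
      rw [← Finset.sum_add_distrib]
      congr 1; funext i; ring
    rw [this, ← hv]
    ring
  -- μ lies in the real span of the rational kernel
  have hμmem := mem_span_rat_ker b μ hμj
  -- write μ as a finite combination of casts of rational kernel vectors
  obtain ⟨N, c, g, hgsum⟩ := Submodule.mem_span_set'.mp hμmem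
  choose kq hkq hkqc using fun j : Fin N => (g j).2
  -- the continuous evaluation map
  set G : (Fin N → ℝ) → (Fin m → ℝ) := fun t => ∑ j : Fin N, t j • ratCastVec m (kq j)
    with hGdef
  have hGcont : Continuous G := by
    apply continuous_finset_sum
    intro j _
    exact (continuous_apply j).smul continuous_const
  have hGc : G c = μ := by
    rw [hGdef, ← hgsum]
    exact Finset.sum_congr rfl fun j _ => by rw [hkqc j]
  -- the open set of t with all coordinates of G t positive
  have hopen : IsOpen {t : Fin N → ℝ | ∀ i, 0 < G t i} := by
    have : {t : Fin N → ℝ | ∀ i, 0 < G t i}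
        = ⋂ i : Fin m, (fun t => G t i) ⁻¹' Set.Ioi 0 := by
      ext t; simp
    rw [this]
    exact isOpen_iInter_of_finite fun i =>
      (((continuous_apply i).comp hGcont).isOpen_preimage _ isOpen_Ioi)
  have hcmem : c ∈ {t : Fin N → ℝ | ∀ i, 0 < G t i} := by
    intro i
    rw [hGc]
    exact lt_of_lt_of_le one_pos (hμpos i)
  -- density of rational points
  have hdense : Dense {t : Fin N → ℝ | ∀ j, ∃ q : ℚ, (q : ℝ) = t j} := by
    have := dense_pi (Set.univ : Set (Fin N))
      (fun j _ => (Rat.denseRange_cast (𝕜 := ℝ) : Dense (Set.range _)))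
    convert this using 1
    ext t
    simp [Set.mem_pi, Set.range]
  obtain ⟨t, ht, htU⟩ := hdense.exists_mem_open hopen ⟨c, hcmem⟩
  choose q hq using ht
  -- the rational positive kernel vector
  set ν : Fin m → ℚ := ∑ j : Fin N, q j • kq j with hνdef
  have hνcast : ∀ i, (ν i : ℝ) = G t i := by
    intro i
    simp only [hνdef, hGdef, Finset.sum_apply, Pi.smul_apply, smul_eq_mul, ratCastVec]
    push_cast
    refine Finset.sum_congr rfl fun j _ => ?_
    rw [hq j]
  have hνpos : ∀ i, 0 < ν i := by
    intro i
    have : (0:ℝ) < (ν i : ℝ) := by rw [hνcast i]; exact htU i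
    exact_mod_cast this
  have hνker : ∀ j', (b j') ⬝ᵥ ν = 0 := by
    intro j'
    have h1 : (b j') ⬝ᵥ ν = ∑ j : Fin N, q j * ((b j') ⬝ᵥ kq j) := by
      simp only [hνdef, dotProduct, Finset.sum_apply, Pi.smul_apply, smul_eq_mul,
        Finset.mul_sum]
      rw [Finset.sum_comm]
      exact Finset.sum_congr rfl fun j _ => Finset.sum_congr rfl fun i _ => by ring
    rw [h1]
    exact Finset.sum_eq_zero fun j _ => by rw [hkq j j', mul_zero]
  -- clear denominators
  set d : ℕ := ∏ i : Fin m, (ν i).den with hddef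
  have hdpos : 0 < d := Finset.prod_pos fun i _ => (ν i).pos
  refine ⟨fun i => ((d / (ν i).den : ℕ) : ℤ) * (ν i).num, ?_, ?_⟩
  · intro i
    have hdvd : (ν i).den ∣ d := Finset.dvd_prod_of_mem _ (Finset.mem_univ i)
    have h1 : 0 < d / (ν i).den := Nat.div_pos (Nat.le_of_dvd hdpos hdvd) (ν i).pos
    have h2 : 0 < (ν i).num := Rat.num_pos.mpr (hνpos i)
    positivity
  · funext j'
    have hcast : ∀ i, ((((d / (ν i).den : ℕ) : ℤ) * (ν i).num : ℤ) : ℚ) = (d : ℚ) * ν i := by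
      intro i
      have hdvd : (ν i).den ∣ d := Finset.dvd_prod_of_mem _ (Finset.mem_univ i)
      have hden : ((ν i).den : ℚ) ≠ 0 := Nat.cast_ne_zero.mpr (ν i).den_nz
      have hnum : ((ν i).num : ℚ) = ν i * ((ν i).den : ℚ) :=
        (div_eq_iff hden).mp (Rat.num_div_den (ν i))
      rw [Int.cast_mul, Int.cast_natCast, hnum]
      rw [show ((d / (ν i).den : ℕ) : ℚ) * (ν i * ((ν i).den : ℚ))
          = (((d / (ν i).den) * (ν i).den : ℕ) : ℚ) * ν i by push_cast; ring]
      rw [Nat.div_mul_cancel hdvd]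
    have hker := hνker j'
    simp only [dotProduct, hbdef] at hker
    simp only [Finset.sum_apply, Pi.smul_apply, Pi.zero_apply, zsmul_eq_mul]
    calc ∑ i : Fin m, ((((d / (ν i).den : ℕ) : ℤ) * (ν i).num : ℤ) : ℚ) * a i j'
        = ∑ i : Fin m, (d : ℚ) * (ν i * a i j') := by
          refine Finset.sum_congr rfl fun i _ => ?_
          rw [hcast i]; ring
      _ = (d : ℚ) * ∑ i : Fin m, a i j' * ν i := by
          rw [← Finset.mul_sum]; congr 1
          exact Finset.sum_congr rfl fun i _ => by ring
      _ = 0 := by rw [hker, mul_zero]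
end
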